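/- Let $P$ be an absolutely continuous probability measure on $\mathbb{R}^p$ and $Q$ one on $\mathbb{R}^q$, and let $F: \mathbb{R}^p \to S$, $G: \mathbb{R}^q \to T$ be Borel maps into the open unit balls such that there exist Borel sets $N_P \subseteq \mathbb{R}^p$, $N_Q \subseteq \mathbb{R}^q$ of measure zero under $P$ and $Q$ respectively, with $F$ restricted to $\mathbb{R}^p \setminus N_P$ and $G$ restricted to $\mathbb{R}^q \setminus N_Q$ injective. If $X \sim P$, $Y \sim Q$ are random vectors on a common probability space and $F(X)$ is independent of $G(Y)$, then $X$ is independent of $Y$. -/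

import Mathlib

open MeasureTheory ProbabilityTheory

/-- Key lemma: a measurable map injective off a measurable set admits a measurable
left inverse on the complement. -/
lemma exists_left_inv {E : Type*} [MeasurableSpace E] [StandardBorelSpace E] [Nonempty E]
    {F : E → E} (hF : Measurable F) {N : Set E} (hN : MeasurableSet N)
    (hFinj : Set.InjOn F Nᶜ) :
    ∃ g : E → E, Measurable g ∧ ∀ x ∈ Nᶜ, g (F x) = x := by
  haveI : StandardBorelSpace (↥(Nᶜ)) := hN.compl.standardBorel
  have hF' : Measurable (fun x : ↥(Nᶜ) => F x) := hF.comp measurable_subtype_coe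
  have hinj : Function.Injective (fun x : ↥(Nᶜ) => F x) := fun a b hab =>
    Subtype.ext (hFinj a.2 b.2 hab)
  obtain ⟨g, hg, hgF⟩ := (hF'.measurableEmbedding hinj).exists_measurable_extend
    (measurable_subtype_coe : Measurable ((↑) : ↥(Nᶜ) → E)) (fun _ => ‹Nonempty E›)
  exact ⟨g, hg, fun x hx => congrFun hgF ⟨x, hx⟩⟩

/-- If `F` and `G` are Borel maps into the open unit balls that are injective off
null sets of the (absolutely continuous) marginal laws of `X` and `Y`, then
independence of `F(X)` and `G(Y)` implies independence of `X` and `Y`. -/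
theorem stmt5 {Ω : Type*} [MeasureSpace Ω] [IsProbabilityMeasure (ℙ : Measure Ω)]
    (p q : ℕ)
    (X : Ω → EuclideanSpace ℝ (Fin p)) (Y : Ω → EuclideanSpace ℝ (Fin q))
    (hX : Measurable X) (hY : Measurable Y)
    (hPac : Measure.map X ℙ ≪ (volume : Measure (EuclideanSpace ℝ (Fin p))))
    (hQac : Measure.map Y ℙ ≪ (volume : Measure (EuclideanSpace ℝ (Fin q))))
    (F : EuclideanSpace ℝ (Fin p) → EuclideanSpace ℝ (Fin p))
    (G : EuclideanSpace ℝ (Fin q) → EuclideanSpace ℝ (Fin q))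
    (hF : Measurable F) (hG : Measurable G)
    (hFball : ∀ x, ‖F x‖ < 1) (hGball : ∀ y, ‖G y‖ < 1)
    (NP : Set (EuclideanSpace ℝ (Fin p))) (NQ : Set (EuclideanSpace ℝ (Fin q)))
    (hNP : MeasurableSet NP) (hNQ : MeasurableSet NQ)
    (hNP0 : Measure.map X ℙ NP = 0) (hNQ0 : Measure.map Y ℙ NQ = 0)
    (hFinj : Set.InjOn F NPᶜ) (hGinj : Set.InjOn G NQᶜ)
    (hindep : IndepFun (F ∘ X) (G ∘ Y) ℙ) :
    IndepFun X Y ℙ := by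
  obtain ⟨g, hg, hgF⟩ := exists_left_inv hF hNP hFinj
  obtain ⟨h, hh, hhG⟩ := exists_left_inv hG hNQ hGinj
  have hXae : (g ∘ (F ∘ X)) =ᵐ[ℙ] X := by
    have : ℙ (X ⁻¹' NP) = 0 := by
      rw [← Measure.map_apply hX hNP] at *; exact hNP0
    filter_upwards [measure_eq_zero_iff_ae_notMem.mp this] with ω hω
    exact hgF (X ω) hω
  have hYae : (h ∘ (G ∘ Y)) =ᵐ[ℙ] Y := by
    have : ℙ (Y ⁻¹' NQ) = 0 := by
      rw [← Measure.map_apply hY hNQ] at *; exact hNQ0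
    filter_upwards [measure_eq_zero_iff_ae_notMem.mp this] with ω hω
    exact hhG (Y ω) hω
  exact (hindep.comp hg hh).congr hXae hYae
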